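/- (Family 2) Let Q = [[a,b],[c,d]] be an invertible 2×2 complex matrix with a·conj(b) + c·conj(d) ≠ 0 and conj(a)·b + conj(c)·d ≠ 0, and set p = ((b·conj(b) + d·conj(d))·(conj(a)·b + conj(c)·d)) / ((a·conj(a) + c·conj(c))·(a·conj(b) + c·conj(d))) and q = ((a·conj(a) + c·conj(c))·(a·conj(b) + c·conj(d))) / ((b·conj(b) + d·conj(d))·(conj(a)·b + conj(c)·d)). Let R be the 4×4 matrix with rows [0,0,0,p], [0,0,1,0], [0,1,0,0], [q,0,0,0], let A = Q ⊗ₖ Q, and let k ∈ ℂ with |k| = 1. Then k·A·R·A⁻¹·T is unitary and satisfies the braided Yang–Baxter equation. -/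

import Mathlib

open Matrix Kronecker

/-- Identify `Fin 2 × Fin 2` with `Fin 4` using the basis ordering
`v₀⊗v₀, v₀⊗v₁, v₁⊗v₀, v₁⊗v₁`. -/
def toFin4 : Fin 2 × Fin 2 → Fin 4 := fun p => ⟨2 * p.1.val + p.2.val, by omega⟩

/-- View an explicit `4 × 4` matrix as a matrix acting on `ℂ² ⊗ ℂ²`. -/
def m44 (M : Matrix (Fin 4) (Fin 4) ℂ) : Matrix (Fin 2 × Fin 2) (Fin 2 × Fin 2) ℂ :=
  M.submatrix toFin4 toFin4

/-- The swap matrix `T`, with `T (vᵢ ⊗ vⱼ) = vⱼ ⊗ vᵢ`. -/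
def swapT : Matrix (Fin 2 × Fin 2) (Fin 2 × Fin 2) ℂ :=
  m44 !![1, 0, 0, 0; 0, 0, 1, 0; 0, 1, 0, 0; 0, 0, 0, 1]

/-- The braided Yang–Baxter equation for a matrix acting on `ℂ² ⊗ ℂ²`. -/
def braidedYB (R : Matrix (Fin 2 × Fin 2) (Fin 2 × Fin 2) ℂ) : Prop :=
  let R12 := Matrix.reindex (Equiv.prodAssoc (Fin 2) (Fin 2) (Fin 2))
      (Equiv.prodAssoc (Fin 2) (Fin 2) (Fin 2)) (R ⊗ₖ (1 : Matrix (Fin 2) (Fin 2) ℂ))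
  let R23 := (1 : Matrix (Fin 2) (Fin 2) ℂ) ⊗ₖ R
  R12 * R23 * R12 = R23 * R12 * R23

lemma swapT_mul_swapT : swapT * swapT = 1 := by
  ext ⟨i, j⟩ ⟨i', j'⟩
  fin_cases i <;> fin_cases j <;> fin_cases i' <;> fin_cases j' <;>
    simp [swapT, m44, toFin4, Matrix.mul_apply, Fintype.sum_prod_type, Fin.sum_univ_two,
      Matrix.one_apply, Matrix.vecHead, Matrix.vecTail, Function.comp, Prod.ext_iff]

lemma swapT_conjTranspose : swapTᴴ = swapT := by
  ext ⟨i, j⟩ ⟨i', j'⟩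
  fin_cases i <;> fin_cases j <;> fin_cases i' <;> fin_cases j' <;>
    simp [swapT, m44, toFin4, Matrix.conjTranspose_apply, Matrix.vecHead, Matrix.vecTail,
      Function.comp]

/-- The swap matrix commutes with `X ⊗ X`. -/
lemma swapT_comm (X : Matrix (Fin 2) (Fin 2) ℂ) : swapT * (X ⊗ₖ X) = (X ⊗ₖ X) * swapT := by
  ext ⟨i, j⟩ ⟨i', j'⟩
  fin_cases i <;> fin_cases j <;> fin_cases i' <;> fin_cases j' <;>
    simp [swapT, m44, toFin4, Matrix.mul_apply, Fintype.sum_prod_type, Fin.sum_univ_two,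
      Matrix.kroneckerMap_apply, Matrix.vecHead, Matrix.vecTail, Function.comp] <;> ring

lemma kron_conjTranspose (X Y : Matrix (Fin 2) (Fin 2) ℂ) : (X ⊗ₖ Y)ᴴ = Xᴴ ⊗ₖ Yᴴ := by
  ext ⟨i, j⟩ ⟨i', j'⟩
  simp [Matrix.conjTranspose_apply, Matrix.kroneckerMap_apply]

lemma R_mul_swapT (p q : ℂ) :
    m44 !![0, 0, 0, p; 0, 0, 1, 0; 0, 1, 0, 0; q, 0, 0, 0] * swapT =
    m44 !![0, 0, 0, p; 0, 1, 0, 0; 0, 0, 1, 0; q, 0, 0, 0] := by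
  ext ⟨i, j⟩ ⟨i', j'⟩
  fin_cases i <;> fin_cases j <;> fin_cases i' <;> fin_cases j' <;>
    simp [swapT, m44, toFin4, Matrix.mul_apply, Fintype.sum_prod_type, Fin.sum_univ_two,
      Matrix.vecHead, Matrix.vecTail, Function.comp]

set_option maxHeartbeats 3000000 in
/-- `R·T` satisfies the braided Yang–Baxter equation. -/
lemma S_yb (p q : ℂ) :
    braidedYB (m44 !![0, 0, 0, p; 0, 1, 0, 0; 0, 0, 1, 0; q, 0, 0, 0]) := by
  show _ = _
  ext ⟨i, j, l⟩ ⟨i', j', l'⟩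
  simp only [Matrix.mul_apply, Fintype.sum_prod_type, Fin.sum_univ_two, Matrix.reindex_apply,
    Matrix.submatrix_apply, Equiv.prodAssoc_symm_apply, Matrix.kroneckerMap_apply, m44, toFin4,
    Matrix.one_apply]
  fin_cases i <;> fin_cases j <;> fin_cases l <;> fin_cases i' <;> fin_cases j' <;> fin_cases l' <;>
    norm_num [Matrix.vecHead, Matrix.vecTail, Function.comp]

set_option maxHeartbeats 2000000 in
/-- The Gram-matrix invariance giving unitarity. -/
lemma gram (a b c d p q : ℂ)
    (hα : a * (starRingEnd ℂ) a + c * (starRingEnd ℂ) c ≠ 0)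
    (hδ : b * (starRingEnd ℂ) b + d * (starRingEnd ℂ) d ≠ 0)
    (hc1 : a * (starRingEnd ℂ) b + c * (starRingEnd ℂ) d ≠ 0)
    (hc2 : (starRingEnd ℂ) a * b + (starRingEnd ℂ) c * d ≠ 0)
    (hp : p = ((b * (starRingEnd ℂ) b + d * (starRingEnd ℂ) d) *
        ((starRingEnd ℂ) a * b + (starRingEnd ℂ) c * d)) /
        ((a * (starRingEnd ℂ) a + c * (starRingEnd ℂ) c) *
        (a * (starRingEnd ℂ) b + c * (starRingEnd ℂ) d)))
    (hq : q = ((a * (starRingEnd ℂ) a + c * (starRingEnd ℂ) c) *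
        (a * (starRingEnd ℂ) b + c * (starRingEnd ℂ) d)) /
        ((b * (starRingEnd ℂ) b + d * (starRingEnd ℂ) d) *
        ((starRingEnd ℂ) a * b + (starRingEnd ℂ) c * d))) :
    (m44 !![0, 0, 0, p; 0, 0, 1, 0; 0, 1, 0, 0; q, 0, 0, 0])ᴴ *
      (((!![a, b; c, d] : Matrix (Fin 2) (Fin 2) ℂ)ᴴ * !![a, b; c, d]) ⊗ₖ
        ((!![a, b; c, d] : Matrix (Fin 2) (Fin 2) ℂ)ᴴ * !![a, b; c, d])) *
      m44 !![0, 0, 0, p; 0, 0, 1, 0; 0, 1, 0, 0; q, 0, 0, 0] =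
    ((!![a, b; c, d] : Matrix (Fin 2) (Fin 2) ℂ)ᴴ * !![a, b; c, d]) ⊗ₖ
      ((!![a, b; c, d] : Matrix (Fin 2) (Fin 2) ℂ)ᴴ * !![a, b; c, d]) := by
  have hα' : (starRingEnd ℂ) a * a + (starRingEnd ℂ) c * c ≠ 0 := fun h =>
    hα (by simpa [mul_comm] using congrArg (starRingEnd ℂ) h)
  have hδ' : (starRingEnd ℂ) b * b + (starRingEnd ℂ) d * d ≠ 0 := fun h =>
    hδ (by simpa [mul_comm] using congrArg (starRingEnd ℂ) h)
  have hc1' : (starRingEnd ℂ) b * a + (starRingEnd ℂ) d * c ≠ 0 := by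
    rwa [mul_comm _ a, mul_comm _ c]
  have hc2' : b * (starRingEnd ℂ) a + d * (starRingEnd ℂ) c ≠ 0 := by
    rwa [mul_comm b, mul_comm d]
  have hc12 : (starRingEnd ℂ) b * a * b * (starRingEnd ℂ) a +
      (starRingEnd ℂ) b * a * d * (starRingEnd ℂ) c + (starRingEnd ℂ) d * c * b * (starRingEnd ℂ) a +
      (starRingEnd ℂ) d * c * d * (starRingEnd ℂ) c ≠ 0 := by
    convert mul_ne_zero hc1' hc2' using 1; ring
  subst hp hq
  ext ⟨i, j⟩ ⟨i', j'⟩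
  fin_cases i <;> fin_cases j <;> fin_cases i' <;> fin_cases j' <;>
    simp only [Matrix.mul_apply, Fintype.sum_prod_type, Fin.sum_univ_two,
      Matrix.kroneckerMap_apply, Matrix.conjTranspose_apply, m44, toFin4,
      Matrix.submatrix_apply, Complex.star_def, map_div₀, map_add, _root_.map_mul,
      Complex.conj_conj, _root_.map_one, _root_.map_zero] <;>
    (try norm_num [Matrix.vecHead, Matrix.vecTail, Function.comp])
  all_goals try field_simp
  all_goals try ring
  all_goals try (left; trivial)

/-- Conjugation by `Q ⊗ Q ⊗ Q` together with a scalar preserves the braided YBE. -/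
lemma yb_conj (Q P : Matrix (Fin 2) (Fin 2) ℂ) (h1 : Q * P = 1) (h2 : P * Q = 1)
    (S : Matrix (Fin 2 × Fin 2) (Fin 2 × Fin 2) ℂ)
    (hS : Matrix.reindex (Equiv.prodAssoc (Fin 2) (Fin 2) (Fin 2))
        (Equiv.prodAssoc (Fin 2) (Fin 2) (Fin 2)) (S ⊗ₖ (1 : Matrix (Fin 2) (Fin 2) ℂ)) *
        ((1 : Matrix (Fin 2) (Fin 2) ℂ) ⊗ₖ S) *
        Matrix.reindex (Equiv.prodAssoc (Fin 2) (Fin 2) (Fin 2))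
        (Equiv.prodAssoc (Fin 2) (Fin 2) (Fin 2)) (S ⊗ₖ (1 : Matrix (Fin 2) (Fin 2) ℂ)) =
        ((1 : Matrix (Fin 2) (Fin 2) ℂ) ⊗ₖ S) *
        Matrix.reindex (Equiv.prodAssoc (Fin 2) (Fin 2) (Fin 2))
        (Equiv.prodAssoc (Fin 2) (Fin 2) (Fin 2)) (S ⊗ₖ (1 : Matrix (Fin 2) (Fin 2) ℂ)) *
        ((1 : Matrix (Fin 2) (Fin 2) ℂ) ⊗ₖ S)) (k : ℂ) :
    braidedYB (k • ((Q ⊗ₖ Q) * S * (P ⊗ₖ P))) := by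
  show _ = _
  set e := Equiv.prodAssoc (Fin 2) (Fin 2) (Fin 2) with he
  set B : Matrix (Fin 2 × (Fin 2 × Fin 2)) (Fin 2 × (Fin 2 × Fin 2)) ℂ := Q ⊗ₖ (Q ⊗ₖ Q) with hB
  set B' : Matrix (Fin 2 × (Fin 2 × Fin 2)) (Fin 2 × (Fin 2 × Fin 2)) ℂ := P ⊗ₖ (P ⊗ₖ P) with hB'
  have hBB' : B' * B = 1 := by
    rw [hB, hB', ← mul_kronecker_mul, ← mul_kronecker_mul, h2, ← Matrix.one_kronecker_one,
      ← Matrix.one_kronecker_one]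
  set S12 := Matrix.reindex e e (S ⊗ₖ (1 : Matrix (Fin 2) (Fin 2) ℂ)) with hS12
  set S23 := (1 : Matrix (Fin 2) (Fin 2) ℂ) ⊗ₖ S with hS23
  have h12 : Matrix.reindex e e ((k • ((Q ⊗ₖ Q) * S * (P ⊗ₖ P))) ⊗ₖ
      (1 : Matrix (Fin 2) (Fin 2) ℂ)) = k • (B * S12 * B') := by
    have hsm : Matrix.reindex e e ((k • ((Q ⊗ₖ Q) * S * (P ⊗ₖ P))) ⊗ₖ
        (1 : Matrix (Fin 2) (Fin 2) ℂ)) = k • Matrix.reindex e e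
        (((Q ⊗ₖ Q) * S * (P ⊗ₖ P)) ⊗ₖ (1 : Matrix (Fin 2) (Fin 2) ℂ)) := by
      rw [Matrix.smul_kronecker]
      rfl
    rw [hsm]
    congr 1
    rw [show ((Q ⊗ₖ Q) * S * (P ⊗ₖ P)) ⊗ₖ (1 : Matrix (Fin 2) (Fin 2) ℂ) =
        ((Q ⊗ₖ Q) ⊗ₖ Q) * (S ⊗ₖ (1 : Matrix (Fin 2) (Fin 2) ℂ)) * ((P ⊗ₖ P) ⊗ₖ P) by
          rw [← mul_kronecker_mul, ← mul_kronecker_mul, Matrix.mul_one, h1]]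
    rw [Matrix.reindex_apply,
      ← Matrix.submatrix_mul_equiv (((Q ⊗ₖ Q) ⊗ₖ Q) * (S ⊗ₖ (1 : Matrix (Fin 2) (Fin 2) ℂ)))
        ((P ⊗ₖ P) ⊗ₖ P) _ e.symm _,
      ← Matrix.submatrix_mul_equiv ((Q ⊗ₖ Q) ⊗ₖ Q) (S ⊗ₖ (1 : Matrix (Fin 2) (Fin 2) ℂ))
        _ e.symm _]
    rw [hB, hB', hS12, he]
    simp only [kronecker_assoc', Matrix.reindex_apply]
  have h23 : (1 : Matrix (Fin 2) (Fin 2) ℂ) ⊗ₖ (k • ((Q ⊗ₖ Q) * S * (P ⊗ₖ P))) =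
      k • (B * S23 * B') := by
    rw [Matrix.kronecker_smul]
    congr 1
    rw [hB, hB', hS23, ← mul_kronecker_mul, ← mul_kronecker_mul, Matrix.mul_one, h1]
  have key : ∀ X Y : Matrix (Fin 2 × (Fin 2 × Fin 2)) (Fin 2 × (Fin 2 × Fin 2)) ℂ,
      (B * X * B') * (B * Y * B') = B * (X * Y) * B' := by
    intro X Y
    calc (B * X * B') * (B * Y * B') = B * (X * ((B' * B) * (Y * B'))) := by
          simp only [Matrix.mul_assoc]
      _ = B * (X * Y) * B' := by
          rw [hBB', Matrix.one_mul, ← Matrix.mul_assoc, ← Matrix.mul_assoc,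
            Matrix.mul_assoc B X Y]
  rw [h12, h23, smul_mul_smul_comm, smul_mul_smul_comm, smul_mul_smul_comm, smul_mul_smul_comm,
    key, key, key, key, hS]

theorem family2_unitary_solution (k a b c d : ℂ)
    (hk : ‖k‖ = 1)
    (hdet : IsUnit (!![a, b; c, d] : Matrix (Fin 2) (Fin 2) ℂ).det)
    (hc1 : a * (starRingEnd ℂ) b + c * (starRingEnd ℂ) d ≠ 0)
    (hc2 : (starRingEnd ℂ) a * b + (starRingEnd ℂ) c * d ≠ 0)
    (p q : ℂ)
    (hp : p = ((b * (starRingEnd ℂ) b + d * (starRingEnd ℂ) d) *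
        ((starRingEnd ℂ) a * b + (starRingEnd ℂ) c * d)) /
        ((a * (starRingEnd ℂ) a + c * (starRingEnd ℂ) c) *
        (a * (starRingEnd ℂ) b + c * (starRingEnd ℂ) d)))
    (hq : q = ((a * (starRingEnd ℂ) a + c * (starRingEnd ℂ) c) *
        (a * (starRingEnd ℂ) b + c * (starRingEnd ℂ) d)) /
        ((b * (starRingEnd ℂ) b + d * (starRingEnd ℂ) d) *
        ((starRingEnd ℂ) a * b + (starRingEnd ℂ) c * d))) :
    let Q : Matrix (Fin 2) (Fin 2) ℂ := !![a, b; c, d]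
    let A := Q ⊗ₖ Q
    let R := m44 !![0, 0, 0, p; 0, 0, 1, 0; 0, 1, 0, 0; q, 0, 0, 0]
    let M := k • (A * R * A⁻¹ * swapT)
    Mᴴ * M = 1 ∧ braidedYB M := by
  intro Q A R M
  have hQP : Q * Q⁻¹ = 1 := Q.mul_nonsing_inv hdet
  have hPQ : Q⁻¹ * Q = 1 := Q.nonsing_inv_mul hdet
  have hAdet : IsUnit A.det := by
    rw [Matrix.det_kronecker]
    exact (hdet.pow _).mul (hdet.pow _)
  have hAA : A * A⁻¹ = 1 := A.mul_nonsing_inv hAdet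
  have hdet0 : a * d - b * c ≠ 0 := by
    have h := hdet
    rw [Matrix.det_fin_two_of] at h
    exact isUnit_iff_ne_zero.mp h
  have hα : a * (starRingEnd ℂ) a + c * (starRingEnd ℂ) c ≠ 0 := by
    intro h
    rw [Complex.mul_conj, Complex.mul_conj] at h
    have h1 : Complex.normSq a + Complex.normSq c = 0 := by exact_mod_cast h
    have ha : Complex.normSq a = 0 := by
      nlinarith [Complex.normSq_nonneg a, Complex.normSq_nonneg c]
    have hc : Complex.normSq c = 0 := by
      nlinarith [Complex.normSq_nonneg a, Complex.normSq_nonneg c]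
    exact hdet0 (by rw [Complex.normSq_eq_zero.mp ha, Complex.normSq_eq_zero.mp hc]; ring)
  have hδ : b * (starRingEnd ℂ) b + d * (starRingEnd ℂ) d ≠ 0 := by
    intro h
    rw [Complex.mul_conj, Complex.mul_conj] at h
    have h1 : Complex.normSq b + Complex.normSq d = 0 := by exact_mod_cast h
    have hb : Complex.normSq b = 0 := by
      nlinarith [Complex.normSq_nonneg b, Complex.normSq_nonneg d]
    have hd : Complex.normSq d = 0 := by
      nlinarith [Complex.normSq_nonneg b, Complex.normSq_nonneg d]
    exact hdet0 (by rw [Complex.normSq_eq_zero.mp hb, Complex.normSq_eq_zero.mp hd]; ring)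
  have hkk : star k * k = 1 := by
    rw [Complex.star_def, mul_comm, Complex.mul_conj, Complex.normSq_eq_norm_sq, hk]
    norm_num
  constructor
  · -- unitarity
    have hgram : Rᴴ * (Aᴴ * A) * R = Aᴴ * A := by
      have hA' : Aᴴ * A = (Qᴴ * Q) ⊗ₖ (Qᴴ * Q) := by
        rw [show Aᴴ = Qᴴ ⊗ₖ Qᴴ from kron_conjTranspose Q Q, ← mul_kronecker_mul]
      rw [hA']
      exact gram a b c d p q hα hδ hc1 hc2 hp hq
    have e1 : ∀ Z : Matrix (Fin 2 × Fin 2) (Fin 2 × Fin 2) ℂ,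
        Rᴴ * (Aᴴ * (A * (R * Z))) = Aᴴ * (A * Z) := by
      intro Z
      have h := congrArg (· * Z) hgram
      simpa only [Matrix.mul_assoc] using h
    show (k • (A * R * A⁻¹ * swapT))ᴴ * (k • (A * R * A⁻¹ * swapT)) = 1
    rw [Matrix.conjTranspose_smul, smul_mul_smul_comm, hkk]
    rw [show (A * R * A⁻¹ * swapT)ᴴ = swapTᴴ * ((A⁻¹)ᴴ * (Rᴴ * Aᴴ)) by
      simp only [Matrix.conjTranspose_mul, Matrix.mul_assoc]]
    have expand : swapTᴴ * ((A⁻¹)ᴴ * (Rᴴ * Aᴴ)) * (A * R * A⁻¹ * swapT) =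
        swapTᴴ * ((A⁻¹)ᴴ * (Rᴴ * (Aᴴ * (A * (R * (A⁻¹ * swapT)))))) := by
      simp only [Matrix.mul_assoc]
    rw [expand, e1 (A⁻¹ * swapT), ← Matrix.mul_assoc A A⁻¹ swapT, hAA, Matrix.one_mul,
      ← Matrix.mul_assoc (A⁻¹)ᴴ Aᴴ swapT, ← Matrix.conjTranspose_mul, hAA,
      Matrix.conjTranspose_one, Matrix.one_mul, swapT_conjTranspose, swapT_mul_swapT, one_smul]
  · -- braided Yang-Baxter
    have hAinv : A⁻¹ = Q⁻¹ ⊗ₖ Q⁻¹ := Matrix.inv_kronecker Q Q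
    have hM : M = k • ((Q ⊗ₖ Q) *
        m44 !![0, 0, 0, p; 0, 1, 0, 0; 0, 0, 1, 0; q, 0, 0, 0] * (Q⁻¹ ⊗ₖ Q⁻¹)) := by
      show k • (A * R * A⁻¹ * swapT) = _
      congr 1
      rw [Matrix.mul_assoc (A * R) A⁻¹ swapT, hAinv, ← swapT_comm Q⁻¹,
        ← Matrix.mul_assoc (A * R) swapT (Q⁻¹ ⊗ₖ Q⁻¹),
        Matrix.mul_assoc A R swapT, R_mul_swapT]
    rw [show M = k • (A * R * A⁻¹ * swapT) from rfl] at hM ⊢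
    rw [hM]
    exact yb_conj Q Q⁻¹ hQP hPQ _ (S_yb p q) k
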